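/- arXiv:2208.09186 — 6 statements merged into one kernel-verified Lean document; each statement's English description precedes it below -/
import Mathlib

section
/- Let p ≥ 1 and let ε = (ε₁,…,ε_p) ∈ (ℝ*)^p be a vector all of whose components are infinitesimal. Then there exist an integer l with 1 ≤ l ≤ p, infinitesimal elements α₁,…,α_l ∈ ℝ*, and linearly independent vectors v₁,…,v_l ∈ ℝ^p such that ε = α₁·v₁ + α₁α₂·v₂ + ⋯ + (α₁α₂⋯α_l)·v_l, where the vectors vᵢ are coerced componentwise into (ℝ*)^p (Goze decomposition). -/
open Hyperreal

lemma Iic_zero_fin {m : ℕ} : Finset.Iic (0 : Fin (m + 1)) = {0} := by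
  ext k
  simp [Fin.le_zero_iff]

lemma Iic_succ_fin {m : ℕ} (i : Fin m) :
    Finset.Iic i.succ = insert (0 : Fin (m + 1)) ((Finset.Iic i).image Fin.succ) := by
  ext k
  induction k using Fin.cases with
  | zero => simp [Fin.zero_le]
  | succ k' =>
    simp only [Finset.mem_Iic, Finset.mem_insert, Finset.mem_image]
    constructor
    · intro h
      exact Or.inr ⟨k', Fin.succ_le_succ_iff.mp h, rfl⟩
    · rintro (h | ⟨a, ha, heq⟩)
      · exact absurd h (Fin.succ_ne_zero k')
      · obtain rfl := Fin.succ_injective _ heq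
        exact Fin.succ_le_succ_iff.mpr ha

lemma prod_Iic_cons {m : ℕ} (a : ℝ*) (α : Fin m → ℝ*) (i : Fin m) :
    ∏ k ∈ Finset.Iic i.succ, Fin.cons a α k = a * ∏ k ∈ Finset.Iic i, α k := by
  rw [Iic_succ_fin, Finset.prod_insert (by simp [Fin.succ_ne_zero]), Finset.prod_image
    (fun x _ y _ h => Fin.succ_injective _ h)]
  simp

theorem goze_aux (n : ℕ) : ∀ (ι : Type) [Fintype ι] [DecidableEq ι],
    Fintype.card ι = n → 1 ≤ n → ∀ e : ι → ℝ*, (∀ i, Infinitesimal (e i)) →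
    ∃ (l : ℕ), 1 ≤ l ∧ l ≤ n ∧ ∃ (α : Fin l → ℝ*) (v : Fin l → (ι → ℝ)),
      (∀ i, Infinitesimal (α i)) ∧ LinearIndependent ℝ v ∧
      ∀ j : ι, e j = ∑ i : Fin l, (∏ k ∈ Finset.Iic i, α k) * ((v i j : ℝ) : ℝ*) := by
  induction n using Nat.strong_induction_on with
  | _ n IH =>
  intro ι _ _ hcard hn e he
  haveI : Nonempty ι := Fintype.card_pos_iff.mp (hcard ▸ hn)
  by_cases hze : ∀ j, e j = 0
  · -- e = 0
    obtain ⟨i₀⟩ := ‹Nonempty ι›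
    refine ⟨1, le_refl 1, hcard ▸ hn, fun _ => 0, fun _ => Pi.single i₀ 1, ?_, ?_, ?_⟩
    · intro _; exact infinitesimal_zero
    · exact linearIndependent_unique_iff.mpr (by
        intro h
        have := congrFun h i₀
        simp at this)
    · intro j
      simp [hze j]
  · push_neg at hze
    obtain ⟨i₀, -, hmax⟩ := Finset.exists_max_image Finset.univ (fun i => |e i|)
      Finset.univ_nonempty
    set a := e i₀ with ha
    have ha0 : a ≠ 0 := by
      obtain ⟨j, hj⟩ := hze
      intro h
      have := hmax j (Finset.mem_univ j)
      rw [h] at this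
      simp only [abs_zero] at this
      exact hj (abs_eq_zero.mp (le_antisymm this (abs_nonneg _)))
    have hfin : ∀ j, ¬Infinite (e j / a) := by
      intro j
      rw [infinite_iff_abs_lt_abs]
      push_neg
      refine ⟨2, ?_⟩
      have h1 : |e j / a| ≤ 1 := by
        rw [abs_div, div_le_one (abs_pos.mpr ha0)]
        exact hmax j (Finset.mem_univ j)
      calc |e j / a| ≤ 1 := h1
        _ ≤ |(2 : ℝ)| := by norm_num
    set v₁ : ι → ℝ := fun j => st (e j / a) with hv₁
    set δ : ι → ℝ* := fun j => e j / a - (v₁ j : ℝ*) with hδ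
    have hδinf : ∀ j, Infinitesimal (δ j) := fun j => infinitesimal_sub_st (hfin j)
    have hv₁i₀ : v₁ i₀ = 1 := by
      simp only [hv₁, ← ha, div_self ha0]
      exact_mod_cast st_id_real 1
    have hδi₀ : δ i₀ = 0 := by
      simp [hδ, ← ha, div_self ha0, hv₁i₀]
    have hej : ∀ j, e j = a * ((v₁ j : ℝ*) + δ j) := by
      intro j
      rw [hδ]
      field_simp
      ring
    by_cases hδ0 : ∀ j, δ j = 0
    · -- l = 1
      refine ⟨1, le_refl 1, hcard ▸ hn, fun _ => a, fun _ => v₁, fun _ => he i₀, ?_, ?_⟩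
      · exact linearIndependent_unique_iff.mpr (by
          intro h
          have := congrFun h i₀
          rw [hv₁i₀] at this
          simp at this)
      · intro j
        rw [hej j, hδ0 j]
        simp [Iic_zero_fin]
    · push_neg at hδ0
      obtain ⟨j₁, hj₁⟩ := hδ0
      have hj₁i₀ : j₁ ≠ i₀ := fun h => hj₁ (h ▸ hδi₀)
      -- recurse on the subtype
      have hcard' : Fintype.card {i : ι // i ≠ i₀} = n - 1 := by
        rw [Fintype.card_subtype_compl, Fintype.card_subtype_eq, hcard]
      have hn' : 1 ≤ n - 1 := by
        have : 0 < Fintype.card {i : ι // i ≠ i₀} :=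
          Fintype.card_pos_iff.mpr ⟨⟨j₁, hj₁i₀⟩⟩
        omega
      have hlt : n - 1 < n := by omega
      obtain ⟨l', hl'1, hl'n, α', w, hα', hw, hwsum⟩ :=
        IH (n - 1) hlt {i : ι // i ≠ i₀} hcard' hn' (fun j => δ j.1) (fun j => hδinf j.1)
      -- extension by zero as a linear map
      set ext : ({i : ι // i ≠ i₀} → ℝ) →ₗ[ℝ] (ι → ℝ) :=
        { toFun := fun f j => if h : j = i₀ then 0 else f ⟨j, h⟩
          map_add' := by
            intro f g; funext j; by_cases h : j = i₀ <;> simp [h]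
          map_smul' := by
            intro c f; funext j; by_cases h : j = i₀ <;> simp [h] } with hext
      have hextinj : LinearMap.ker ext = ⊥ := by
        rw [LinearMap.ker_eq_bot']
        intro f hf
        funext j
        have := congrFun hf j.1
        simpa [hext, j.2] using this
      have hwlind : LinearIndependent ℝ (ext ∘ w) := hw.map' ext hextinj
      have hspan : v₁ ∉ Submodule.span ℝ (Set.range (ext ∘ w)) := by
        intro hmem
        have hle : Submodule.span ℝ (Set.range (ext ∘ w)) ≤
            LinearMap.ker (LinearMap.proj (R := ℝ) (φ := fun _ : ι => ℝ) i₀) := by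
          rw [Submodule.span_le]
          rintro _ ⟨i, rfl⟩
          simp [hext]
        have := hle hmem
        simp only [LinearMap.mem_ker, LinearMap.proj_apply] at this
        rw [hv₁i₀] at this
        exact one_ne_zero this
      refine ⟨l' + 1, by omega, by omega, Fin.cons a α', Fin.cons v₁ (ext ∘ w), ?_, ?_, ?_⟩
      · intro i
        induction i using Fin.cases with
        | zero => exact he i₀
        | succ i' => exact hα' i'
      · exact hwlind.fin_cons hspan
      · intro j
        rw [Fin.sum_univ_succ]
        simp only [Fin.cons_zero, Fin.cons_succ]
        have h0 : ∏ k ∈ Finset.Iic (0 : Fin (l' + 1)), Fin.cons a α' k = a := by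
          rw [Iic_zero_fin]; simp
        rw [h0]
        have hterm : ∀ i : Fin l',
            (∏ k ∈ Finset.Iic i.succ, Fin.cons a α' k) * ((ext ∘ w) i j : ℝ*) =
            a * ((∏ k ∈ Finset.Iic i, α' k) * ((ext ∘ w) i j : ℝ*)) := by
          intro i
          rw [prod_Iic_cons, mul_assoc]
        rw [Finset.sum_congr rfl (fun i _ => hterm i), ← Finset.mul_sum]
        by_cases hj : j = i₀
        · subst hj
          have : ∀ i : Fin l', ((ext ∘ w) i j : ℝ) = 0 := by
            intro i; simp [hext]
          simp only [Function.comp_apply]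
          rw [hej j, hδi₀, hv₁i₀]
          simp [hext]
        · have hval : ∀ i : Fin l', ((ext ∘ w) i j : ℝ) = w i ⟨j, hj⟩ := by
            intro i; simp [hext, hj]
          calc e j = a * ((v₁ j : ℝ*) + δ j) := hej j
            _ = a * (v₁ j : ℝ*) + a * δ j := by ring
            _ = _ := by
                congr 1
                rw [hwsum ⟨j, hj⟩]
                congr 1
                exact Finset.sum_congr rfl (fun i _ => by rw [← hval i])

/-- Goze decomposition: a vector `e ∈ (ℝ*)^p` of infinitesimals can be written as
`e = α₁ v₁ + α₁α₂ v₂ + ⋯ + α₁⋯α_l v_l` with the `α i` infinitesimal and the `v i`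
linearly independent real vectors. -/
theorem goze_decomposition (p : ℕ) (hp : 1 ≤ p) (e : Fin p → ℝ*)
    (he : ∀ i, Infinitesimal (e i)) :
    ∃ (l : ℕ) (_ : 1 ≤ l) (_ : l ≤ p) (α : Fin l → ℝ*) (v : Fin l → (Fin p → ℝ)),
      (∀ i, Infinitesimal (α i)) ∧ LinearIndependent ℝ v ∧
      ∀ j : Fin p, e j = ∑ i : Fin l, (∏ k ∈ Finset.Iic i, α k) * ((v i j : ℝ) : ℝ*) := by
  obtain ⟨l, h1, h2, α, v, hα, hv, hsum⟩ :=
    goze_aux p (Fin p) (Fintype.card_fin p) hp e he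
  exact ⟨l, h1, h2, α, v, hα, hv, hsum⟩
end

section
/- Let Q = α₀ + α₁X + ⋯ + αₙXⁿ ∈ ℝ*[X] with n ≥ 1, every coefficient αᵢ finite, and the leading coefficient αₙ not infinitesimal. Then every root ξ ∈ ℝ* of Q is finite, and st ξ is a root of the real polynomial P = a₀ + a₁X + ⋯ + aₙXⁿ, where aᵢ = st αᵢ for i = 0,…,n. -/
open Hyperreal Polynomial

lemma st_zero' : st (0 : ℝ*) = 0 := by
  rw [show ((0 : ℝ*)) = ((0 : ℝ) : ℝ*) by norm_num, st_id_real]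

lemma not_infinite_pow {x : ℝ*} (hx : ¬Infinite x) (k : ℕ) : ¬Infinite (x ^ k) := by
  induction k with
  | zero =>
    simpa using not_infinite_real 1
  | succ k ih =>
    rw [pow_succ]
    exact not_infinite_mul ih hx

lemma fin_mul_infinitesimal {x y : ℝ*} (hx : ¬Infinite x) (hy : Infinitesimal y) :
    Infinitesimal (x * y) := by
  obtain ⟨r, hr⟩ := exists_st_of_not_infinite hx
  have := hr.mul hy
  rwa [mul_zero] at this

lemma infinitesimal_pow {x : ℝ*} (hx : Infinitesimal x) {k : ℕ} (hk : 1 ≤ k) :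
    Infinitesimal (x ^ k) := by
  induction k with
  | zero => omega
  | succ k ih =>
    rcases Nat.eq_or_lt_of_le hk with h | h
    · simpa [← h] using hx
    · rw [pow_succ]
      exact fin_mul_infinitesimal ((ih (by omega)).not_infinite) hx

lemma infinitesimal_sum {s : Finset ℕ} {f : ℕ → ℝ*} (h : ∀ i ∈ s, Infinitesimal (f i)) :
    Infinitesimal (∑ i ∈ s, f i) := by
  classical
  induction s using Finset.induction with
  | empty => simpa using infinitesimal_zero
  | insert _ _ hx ih =>
    rw [Finset.sum_insert hx]
    exact (h _ (Finset.mem_insert_self _ _)).add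
      (ih fun i hi => h i (Finset.mem_insert_of_mem hi))

lemma isSt_pow {x : ℝ*} {r : ℝ} (hx : IsSt x r) (k : ℕ) : IsSt (x ^ k) (r ^ k) := by
  induction k with
  | zero => simpa using isSt_refl_real 1
  | succ k ih =>
    rw [pow_succ, pow_succ]
    exact ih.mul hx

lemma isSt_sum {s : Finset ℕ} {f : ℕ → ℝ*} {g : ℕ → ℝ}
    (h : ∀ i ∈ s, IsSt (f i) (g i)) : IsSt (∑ i ∈ s, f i) (∑ i ∈ s, g i) := by
  classical
  induction s using Finset.induction with
  | empty => simpa using isSt_refl_real 0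
  | insert _ _ hx ih =>
    rw [Finset.sum_insert hx, Finset.sum_insert hx]
    exact (h _ (Finset.mem_insert_self _ _)).add
      (ih fun i hi => h i (Finset.mem_insert_of_mem hi))

/-- If `Q ∈ ℝ*[X]` has degree `n ≥ 1`, all its coefficients are finite and its leading
coefficient is not infinitesimal, then every root `ξ` of `Q` is finite and the standard
part `st ξ` is a root of the real polynomial `P` whose coefficients are the standard
parts of the coefficients of `Q`. -/
theorem roots_finite_and_st_root (n : ℕ) (hn : 1 ≤ n) (Q : Polynomial ℝ*)
    (hdeg : Q.natDegree = n)
    (hfin : ∀ i, ¬Infinite (Q.coeff i))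
    (hlead : ¬Infinitesimal (Q.coeff n))
    (P : Polynomial ℝ) (hP : ∀ i, P.coeff i = st (Q.coeff i)) :
    ∀ ξ : ℝ*, Q.eval ξ = 0 → ¬Infinite ξ ∧ P.eval (st ξ) = 0 := by
  intro ξ hξ
  have heval : ∑ i ∈ Finset.range (n + 1), Q.coeff i * ξ ^ i = 0 := by
    rw [← hdeg] at *
    rw [eval_eq_sum_range] at hξ
    exact hξ
  -- ξ is finite
  have hfinξ : ¬Infinite ξ := by
    by_contra hinf
    have hξ0 : ξ ≠ 0 := fun h => (h ▸ hinf).ne_zero rfl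
    have hinv : Infinitesimal ξ⁻¹ := infinitesimal_inv_of_infinite hinf
    -- multiply the root equation by (ξ⁻¹)^n
    have hsplit : ∑ i ∈ Finset.range (n + 1), Q.coeff i * ξ ^ i
        = Q.coeff n * ξ ^ n + ∑ i ∈ Finset.range n, Q.coeff i * ξ ^ i := by
      rw [Finset.sum_range_succ, add_comm]
    have key : Q.coeff n = -∑ i ∈ Finset.range n, Q.coeff i * ξ ^ i * (ξ⁻¹) ^ n := by
      have h1 : Q.coeff n * ξ ^ n + ∑ i ∈ Finset.range n, Q.coeff i * ξ ^ i = 0 := by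
        rw [← hsplit]; exact heval
      have h2 : (Q.coeff n * ξ ^ n) * (ξ⁻¹) ^ n
          + (∑ i ∈ Finset.range n, Q.coeff i * ξ ^ i) * (ξ⁻¹) ^ n = 0 := by
        rw [← add_mul, h1, zero_mul]
      have h3 : (Q.coeff n * ξ ^ n) * (ξ⁻¹) ^ n = Q.coeff n := by
        rw [mul_assoc, ← mul_pow, mul_inv_cancel₀ hξ0, one_pow, mul_one]
      rw [h3, Finset.sum_mul] at h2
      linarith [h2]
    have hinfinitesimal : Infinitesimal (Q.coeff n) := by
      rw [key]
      apply Infinitesimal.neg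
      apply infinitesimal_sum
      intro i hi
      have hi' : i < n := Finset.mem_range.mp hi
      have hterm : Q.coeff i * ξ ^ i * (ξ⁻¹) ^ n
          = Q.coeff i * (ξ⁻¹) ^ (n - i) := by
        have : (ξ⁻¹) ^ n = (ξ⁻¹) ^ i * (ξ⁻¹) ^ (n - i) := by
          rw [← pow_add]; congr 1; omega
        rw [this, mul_assoc, ← mul_assoc (ξ ^ i), ← mul_pow,
          mul_inv_cancel₀ hξ0, one_pow, one_mul]
      rw [hterm]
      exact fin_mul_infinitesimal (hfin i) (infinitesimal_pow hinv (by omega))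
    exact hlead hinfinitesimal
  refine ⟨hfinξ, ?_⟩
  -- standard part is a root of P
  have hst : IsSt ξ (st ξ) := isSt_st' hfinξ
  have hsum : IsSt (∑ i ∈ Finset.range (n + 1), Q.coeff i * ξ ^ i)
      (∑ i ∈ Finset.range (n + 1), st (Q.coeff i) * (st ξ) ^ i) := by
    apply isSt_sum
    intro i _
    exact (isSt_st' (hfin i)).mul (isSt_pow hst i)
  rw [heval] at hsum
  have hzero : ∑ i ∈ Finset.range (n + 1), st (Q.coeff i) * (st ξ) ^ i = 0 := by
    have h0 : IsSt (0 : ℝ*) (0 : ℝ) := by simpa using isSt_refl_real 0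
    have := hsum.st_eq
    rw [h0.st_eq] at this
    linarith
  have hPdeg : P.natDegree < n + 1 := by
    rw [Nat.lt_succ_iff]
    apply natDegree_le_iff_coeff_eq_zero.mpr
    intro i hi
    rw [hP i, coeff_eq_zero_of_natDegree_lt (by omega : Q.natDegree < i), st_zero']
  rw [eval_eq_sum_range' hPdeg]
  rw [← hzero]
  apply Finset.sum_congr rfl
  intro i _
  rw [hP i]
end

section
/- Let P ∈ ℂ[X] with deg P = n ≥ 1. For every real ε > 0 that is smaller than half of the minimal distance between any two distinct roots of P (this restriction being vacuous when P has at most one distinct root), there exists δ > 0 such that for every Q ∈ ℂ[X] with deg Q = n and |coeff_i(Q) − coeff_i(P)| ≤ δ for all 0 ≤ i ≤ n, the following hold: (i) every complex root of Q lies at distance less than ε from some root of P; (ii) for every root u of P, the number of roots of Q, counted with multiplicity, lying in the open disc of center u and radius ε equals the multiplicity of u as a root of P. -/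
set_option maxHeartbeats 1600000

open Polynomial Finset NNReal

noncomputable def Complex.abs : AbsoluteValue ℂ ℝ := NormedField.toAbsoluteValue ℂ

lemma Complex.norm_eq_abs (z : ℂ) : ‖z‖ = Complex.abs z := rfl


/-- Common δ over a finite set, for a δ-antitone property. -/
lemma exists_common_delta {α : Type*} (F : Finset α) (p : α → ℝ → Prop)
    (hmono : ∀ a δ δ', 0 < δ' → δ' ≤ δ → p a δ → p a δ')
    (h : ∀ a ∈ F, ∃ δ > 0, p a δ) : ∃ δ > 0, ∀ a ∈ F, p a δ := by
  classical
  induction F using Finset.induction_on with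
  | empty => exact ⟨1, one_pos, by simp⟩
  | @insert a F hnot ih =>
    obtain ⟨δ₁, hδ₁, h₁⟩ := h a (Finset.mem_insert_self a F)
    obtain ⟨δ₂, hδ₂, h₂⟩ := ih fun b hb => h b (Finset.mem_insert_of_mem hb)
    refine ⟨min δ₁ δ₂, lt_min hδ₁ hδ₂, ?_⟩
    intro b hb
    rcases Finset.mem_insert.mp hb with rfl | hb
    · exact hmono b δ₁ _ (lt_min hδ₁ hδ₂) (min_le_left _ _) h₁
    · exact hmono b δ₂ _ (lt_min hδ₁ hδ₂) (min_le_right _ _) (h₂ b hb)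

/-- Bound on the difference of evaluations from bounds on coefficients. -/
lemma eval_diff_bound (P Q : Polynomial ℂ) (n : ℕ) (hP : P.natDegree ≤ n) (hQ : Q.natDegree ≤ n)
    (δ M : ℝ) (hM : 1 ≤ M) (hcoeff : ∀ i ≤ n, Complex.abs (Q.coeff i - P.coeff i) ≤ δ)
    (z : ℂ) (hz : Complex.abs z ≤ M) :
    Complex.abs (Q.eval z - P.eval z) ≤ (n + 1) * δ * M ^ n := by
  have hM0 : (0:ℝ) ≤ M := le_trans zero_le_one hM
  have hz0 : (0:ℝ) ≤ Complex.abs z := AbsoluteValue.nonneg _ _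
  rw [eval_eq_sum_range' (lt_of_le_of_lt hQ (Nat.lt_succ_self n)),
      eval_eq_sum_range' (lt_of_le_of_lt hP (Nat.lt_succ_self n)), ← Finset.sum_sub_distrib]
  calc Complex.abs (∑ i ∈ Finset.range (n+1), (Q.coeff i * z ^ i - P.coeff i * z ^ i))
      ≤ ∑ i ∈ Finset.range (n+1), Complex.abs (Q.coeff i * z ^ i - P.coeff i * z ^ i) := by
        apply AbsoluteValue.sum_le
    _ ≤ ∑ i ∈ Finset.range (n+1), δ * M ^ n := by
        apply Finset.sum_le_sum
        intro i hi
        rw [← sub_mul, map_mul, map_pow]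
        have h1 : Complex.abs (Q.coeff i - P.coeff i) ≤ δ :=
          hcoeff i (Nat.lt_succ_iff.mp (Finset.mem_range.mp hi))
        have h2 : Complex.abs z ^ i ≤ M ^ n := by
          calc Complex.abs z ^ i ≤ M ^ i := by gcongr
            _ ≤ M ^ n := pow_le_pow_right₀ hM (Nat.lt_succ_iff.mp (Finset.mem_range.mp hi))
        exact mul_le_mul h1 h2 (pow_nonneg hz0 i) (le_trans (AbsoluteValue.nonneg _ _) h1)
    _ = (n + 1) * δ * M ^ n := by
        rw [Finset.sum_const, Finset.card_range]
        ring



/-- Cauchy-type bound on roots, real version. -/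
lemma root_bound (Q : Polynomial ℂ) (hQ : Q ≠ 0) (z : ℂ) (hz : Q.IsRoot z) :
    Complex.abs z ≤ 1 + (∑ i ∈ Finset.range Q.natDegree, Complex.abs (Q.coeff i)) /
      Complex.abs Q.leadingCoeff := by
  have h := Polynomial.IsRoot.norm_lt_cauchyBound hQ hz
  have hsum : Polynomial.cauchyBound Q ≤
      (Finset.range Q.natDegree).sum (fun i => ‖Q.coeff i‖₊) / ‖Q.leadingCoeff‖₊ + 1 := by
    unfold Polynomial.cauchyBound
    gcongr
    apply Finset.sup_le
    intro i hi
    exact Finset.single_le_sum (f := fun i => ‖Q.coeff i‖₊) (fun _ _ => zero_le) hi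
  have := lt_of_lt_of_le h hsum
  have hcast : ((Finset.range Q.natDegree).sum (fun i => ‖Q.coeff i‖₊) / ‖Q.leadingCoeff‖₊
      + 1 : ℝ≥0) = ((∑ i ∈ Finset.range Q.natDegree, Complex.abs (Q.coeff i)) /
      Complex.abs Q.leadingCoeff + 1 : ℝ) := by
    simp [NNReal.coe_div, NNReal.coe_sum, coe_nnnorm, Complex.norm_eq_abs]
  have h2 : (‖z‖₊ : ℝ) ≤ ((Finset.range Q.natDegree).sum (fun i => ‖Q.coeff i‖₊)
      / ‖Q.leadingCoeff‖₊ + 1 : ℝ≥0) := by exact_mod_cast this.le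
  rw [hcast] at h2
  simpa [Complex.norm_eq_abs, add_comm] using h2

/-- Bound on difference of powers. -/
lemma pow_diff_bound (z u : ℂ) (M : ℝ) (hM : 1 ≤ M) (hz : Complex.abs z ≤ M)
    (hu : Complex.abs u ≤ M) (k : ℕ) :
    Complex.abs (z ^ k - u ^ k) ≤ k * M ^ k * Complex.abs (z - u) := by
  induction k with
  | zero => simp
  | succ k ih =>
    have hM0 : (0:ℝ) ≤ M := le_trans zero_le_one hM
    have key : z ^ (k+1) - u ^ (k+1) = z ^ k * (z - u) + (z ^ k - u ^ k) * u := by ring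
    rw [key]
    calc Complex.abs (z ^ k * (z - u) + (z ^ k - u ^ k) * u)
        ≤ Complex.abs (z ^ k * (z - u)) + Complex.abs ((z ^ k - u ^ k) * u) :=
          AbsoluteValue.add_le _ _ _
      _ ≤ M ^ k * Complex.abs (z - u) + (k * M ^ k * Complex.abs (z - u)) * M := by
          rw [map_mul, map_mul, map_pow]
          gcongr <;> first | exact AbsoluteValue.nonneg _ _ | skip
      _ ≤ ((k+1 : ℕ)) * M ^ (k+1) * Complex.abs (z - u) := by
          have h1 : M ^ k ≤ M ^ (k+1) := pow_le_pow_right₀ hM (Nat.le_succ k)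
          have h2 : (0:ℝ) ≤ Complex.abs (z - u) := AbsoluteValue.nonneg _ _
          have e : (k:ℝ) * M ^ k * Complex.abs (z - u) * M
              = k * M ^ (k+1) * Complex.abs (z - u) := by rw [pow_succ]; ring
          rw [e]
          push_cast
          have := mul_le_mul_of_nonneg_right h1 h2
          nlinarith


lemma pow_card_le_prod_real (s : Multiset ℝ) (a : ℝ) (ha : 0 ≤ a) (h : ∀ x ∈ s, a ≤ x) :
    a ^ Multiset.card s ≤ s.prod := by
  induction s using Multiset.induction_on with
  | empty => simp
  | cons x s ih =>
    rw [Multiset.prod_cons, Multiset.card_cons, pow_succ, mul_comm]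
    have hx : a ≤ x := h x (Multiset.mem_cons_self x s)
    have hs : a ^ Multiset.card s ≤ s.prod := ih fun y hy => h y (Multiset.mem_cons_of_mem hy)
    exact mul_le_mul hx hs (pow_nonneg ha _) (le_trans ha hx)



/-- Uniform bound on roots of all polynomials with coefficients close to P. -/
lemma uniform_root_bound (P : Polynomial ℂ) (n : ℕ) (hdeg : P.natDegree = n) (hP : P ≠ 0) :
    ∃ M : ℝ, 1 ≤ M ∧ ∀ Q : Polynomial ℂ, Q.natDegree = n →
      (∀ i ≤ n, Complex.abs (Q.coeff i - P.coeff i)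
        ≤ min 1 (Complex.abs (P.coeff n) / 2)) →
      ∀ z ∈ Q.roots, Complex.abs z ≤ M := by
  have hc : P.coeff n ≠ 0 := by
    rw [← hdeg]; exact Polynomial.leadingCoeff_ne_zero.mpr hP
  have hc0 : 0 < Complex.abs (P.coeff n) := AbsoluteValue.pos _ hc
  refine ⟨1 + (∑ i ∈ Finset.range n, (Complex.abs (P.coeff i) + 1)) /
      (Complex.abs (P.coeff n) / 2), le_add_of_nonneg_right (div_nonneg
      (Finset.sum_nonneg fun i _ => by positivity) (by positivity)), ?_⟩
  intro Q hQdeg hQcoeff z hz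
  have hlead : Complex.abs (P.coeff n) / 2 ≤ Complex.abs (Q.coeff n) := by
    have h1 := hQcoeff n le_rfl
    have h2 : Complex.abs (P.coeff n) - Complex.abs (Q.coeff n)
        ≤ Complex.abs (Q.coeff n - P.coeff n) := by
      calc Complex.abs (P.coeff n) - Complex.abs (Q.coeff n)
          ≤ Complex.abs (P.coeff n - Q.coeff n) := by
            have := AbsoluteValue.add_le Complex.abs (P.coeff n - Q.coeff n) (Q.coeff n)
            simp only [sub_add_cancel] at this
            linarith
        _ = Complex.abs (Q.coeff n - P.coeff n) := by
            rw [show Q.coeff n - P.coeff n = -(P.coeff n - Q.coeff n) by ring,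
              AbsoluteValue.map_neg]
    have h3 : Complex.abs (Q.coeff n - P.coeff n) ≤ Complex.abs (P.coeff n) / 2 :=
      le_trans h1 (min_le_right _ _)
    linarith
  have hQne : Q ≠ 0 := by
    intro h0
    rw [h0, Polynomial.coeff_zero, map_zero] at hlead
    linarith
  have hzr : Q.IsRoot z := Polynomial.isRoot_of_mem_roots hz
  have hb := root_bound Q hQne z hzr
  have hleadQ : Q.leadingCoeff = Q.coeff n := by rw [Polynomial.leadingCoeff, hQdeg]
  rw [hleadQ, hQdeg] at hb
  have hnum : ∑ i ∈ Finset.range n, Complex.abs (Q.coeff i)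
      ≤ ∑ i ∈ Finset.range n, (Complex.abs (P.coeff i) + 1) := by
    apply Finset.sum_le_sum
    intro i hi
    have h1 : Complex.abs (Q.coeff i - P.coeff i) ≤ 1 :=
      le_trans (hQcoeff i (le_of_lt (Finset.mem_range.mp hi))) (min_le_left _ _)
    calc Complex.abs (Q.coeff i)
        = Complex.abs (P.coeff i + (Q.coeff i - P.coeff i)) := by rw [add_sub_cancel]
      _ ≤ Complex.abs (P.coeff i) + Complex.abs (Q.coeff i - P.coeff i) :=
        AbsoluteValue.add_le _ _ _
      _ ≤ Complex.abs (P.coeff i) + 1 := by linarith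
  have hden : (0:ℝ) < Complex.abs (P.coeff n) / 2 := by linarith
  have hnonneg : (0:ℝ) ≤ ∑ i ∈ Finset.range n, Complex.abs (Q.coeff i) :=
    Finset.sum_nonneg fun i _ => AbsoluteValue.nonneg _ _
  calc Complex.abs z
      ≤ 1 + (∑ i ∈ Finset.range n, Complex.abs (Q.coeff i)) / Complex.abs (Q.coeff n) := hb
    _ ≤ 1 + (∑ i ∈ Finset.range n, (Complex.abs (P.coeff i) + 1)) /
        (Complex.abs (P.coeff n) / 2) := by
        have hnn : (0:ℝ) ≤ ∑ i ∈ Finset.range n, (Complex.abs (P.coeff i) + 1) :=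
          Finset.sum_nonneg fun i _ => by positivity
        have := div_le_div₀ hnn hnum hden hlead; linarith



/-- Quantitative version of part (i): roots of close-by polynomials are near roots of P. -/
lemma near_root (P : Polynomial ℂ) (n : ℕ) (hdeg : P.natDegree = n) (hn : 0 < n)
    (η : ℝ) (hη : 0 < η) :
    ∃ δ > 0, ∀ Q : Polynomial ℂ, Q.natDegree = n →
      (∀ i ≤ n, Complex.abs (Q.coeff i - P.coeff i) ≤ δ) →
      ∀ z ∈ Q.roots, ∃ u ∈ P.roots, Complex.abs (z - u) < η := by
  have hP : P ≠ 0 := fun h => by simp [h] at hdeg; omega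
  have hc : P.coeff n ≠ 0 := by
    rw [← hdeg]; exact Polynomial.leadingCoeff_ne_zero.mpr hP
  have hc0 : 0 < Complex.abs (P.coeff n) := AbsoluteValue.pos _ hc
  obtain ⟨M, hM1, hM⟩ := uniform_root_bound P n hdeg hP
  have hM0 : (0:ℝ) < M := lt_of_lt_of_le one_pos hM1
  have hA : (0:ℝ) < (n+1) * M ^ n := by positivity
  refine ⟨min (min 1 (Complex.abs (P.coeff n) / 2))
      (Complex.abs (P.coeff n) * η ^ n / (2 * ((n+1) * M ^ n))), by positivity, ?_⟩
  intro Q hQdeg hQcoeff z hz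
  by_contra hcon
  push_neg at hcon
  have hcon' : ∀ u ∈ P.roots, η ≤ Complex.abs (z - u) := fun u hu => hcon u hu
  have hcoeff1 : ∀ i ≤ n, Complex.abs (Q.coeff i - P.coeff i)
      ≤ min 1 (Complex.abs (P.coeff n) / 2) :=
    fun i hi => le_trans (hQcoeff i hi) (min_le_left _ _)
  have hzM : Complex.abs z ≤ M := hM Q hQdeg hcoeff1 z hz
  have hcard : Multiset.card P.roots = n := by
    rw [← hdeg]; exact Polynomial.splits_iff_card_roots.mp (IsAlgClosed.splits P)
  -- lower bound on |P(z)|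
  have hprod : η ^ n ≤ (P.roots.map (fun u => Complex.abs (z - u))).prod := by
    have hc2 : Multiset.card (P.roots.map (fun u => Complex.abs (z - u))) = n := by
      rw [Multiset.card_map, hcard]
    rw [← hc2]
    apply pow_card_le_prod_real _ _ hη.le
    intro x hx
    obtain ⟨u, hu, rfl⟩ := Multiset.mem_map.mp hx
    exact hcon' u hu
  have hPz : Complex.abs (P.eval z)
      = Complex.abs (P.coeff n) * (P.roots.map (fun u => Complex.abs (z - u))).prod := by
    conv_lhs => rw [Polynomial.Splits.eq_prod_roots (IsAlgClosed.splits P)]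
    rw [Polynomial.eval_mul, Polynomial.eval_C, Polynomial.eval_multiset_prod, map_mul,
      map_multiset_prod, Multiset.map_map, Multiset.map_map]
    congr 1
    · rw [Polynomial.leadingCoeff, hdeg]
    · congr 1
      apply Multiset.map_congr rfl
      intro u _
      simp
  have hPzlow : Complex.abs (P.coeff n) * η ^ n ≤ Complex.abs (P.eval z) := by
    rw [hPz]
    exact mul_le_mul_of_nonneg_left hprod hc0.le
  -- upper bound on |P(z)|
  have hQz : Q.eval z = 0 := Polynomial.isRoot_of_mem_roots hz
  have hup := eval_diff_bound P Q n (le_of_eq hdeg) (le_of_eq hQdeg) _ M hM1 hQcoeff z hzM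
  rw [hQz, zero_sub, AbsoluteValue.map_neg] at hup
  have hδle : min (min 1 (Complex.abs (P.coeff n) / 2))
      (Complex.abs (P.coeff n) * η ^ n / (2 * ((n+1) * M ^ n)))
      ≤ Complex.abs (P.coeff n) * η ^ n / (2 * ((n+1) * M ^ n)) := min_le_right _ _
  have hfinal : ((n:ℝ)+1) * (min (min 1 (Complex.abs (P.coeff n) / 2))
      (Complex.abs (P.coeff n) * η ^ n / (2 * ((n+1) * M ^ n)))) * M ^ n
      ≤ Complex.abs (P.coeff n) * η ^ n / 2 := by
    have h2 : ((n:ℝ)+1) * (Complex.abs (P.coeff n) * η ^ n / (2 * ((n+1) * M ^ n))) * M ^ n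
        = Complex.abs (P.coeff n) * η ^ n / 2 := by
      field_simp
    calc ((n:ℝ)+1) * _ * M ^ n ≤ ((n:ℝ)+1) * (Complex.abs (P.coeff n) * η ^ n
        / (2 * ((n+1) * M ^ n))) * M ^ n := by gcongr <;> first | exact hδle | positivity | skip
      _ = Complex.abs (P.coeff n) * η ^ n / 2 := h2
  have hpos : 0 < Complex.abs (P.coeff n) * η ^ n := by positivity
  linarith [le_trans hPzlow (le_trans hup hfinal)]



/-- Coefficients of `Q /ₘ (X - C z)` are close to those of `P /ₘ (X - C u)`. -/
lemma quot_coeff_bound (P Q : Polynomial ℂ) (m : ℕ) (hP : P.natDegree = m)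
    (hQ : Q.natDegree = m) (z u : ℂ) (M δ η B : ℝ) (hM1 : 1 ≤ M)
    (hz : Complex.abs z ≤ M) (hu : Complex.abs u ≤ M)
    (hδ : ∀ i ≤ m, Complex.abs (Q.coeff i - P.coeff i) ≤ δ)
    (hη : Complex.abs (z - u) ≤ η)
    (hB : ∀ j ≤ m, Complex.abs (P.coeff j) ≤ B) (i : ℕ) :
    Complex.abs ((Q /ₘ (X - C z)).coeff i - (P /ₘ (X - C u)).coeff i)
      ≤ (m + 1) * (M ^ m * δ + m * M ^ m * B * η) := by
  have hδ0 : (0:ℝ) ≤ δ := le_trans (AbsoluteValue.nonneg _ _) (hδ 0 (Nat.zero_le m))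
  have hη0 : (0:ℝ) ≤ η := le_trans (AbsoluteValue.nonneg _ _) hη
  have hB0 : (0:ℝ) ≤ B := le_trans (AbsoluteValue.nonneg _ _) (hB 0 (Nat.zero_le m))
  have hM0 : (0:ℝ) ≤ M := le_trans zero_le_one hM1
  rw [Polynomial.coeff_divByMonic_X_sub_C, Polynomial.coeff_divByMonic_X_sub_C, hP, hQ,
    ← Finset.sum_sub_distrib]
  calc Complex.abs (∑ j ∈ Finset.Icc (i+1) m,
        (z ^ (j - (i+1)) * Q.coeff j - u ^ (j - (i+1)) * P.coeff j))
      ≤ ∑ j ∈ Finset.Icc (i+1) m,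
        Complex.abs (z ^ (j - (i+1)) * Q.coeff j - u ^ (j - (i+1)) * P.coeff j) :=
        AbsoluteValue.sum_le _ _ _
    _ ≤ ∑ _j ∈ Finset.Icc (i+1) m, (M ^ m * δ + m * M ^ m * B * η) := by
        apply Finset.sum_le_sum
        intro j hj
        obtain ⟨hj1, hj2⟩ := Finset.mem_Icc.mp hj
        set k := j - (i+1) with hk
        have hkm : k ≤ m := le_trans (Nat.sub_le _ _) hj2
        have key : z ^ k * Q.coeff j - u ^ k * P.coeff j
            = z ^ k * (Q.coeff j - P.coeff j) + (z ^ k - u ^ k) * P.coeff j := by ring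
        rw [key]
        calc Complex.abs (z ^ k * (Q.coeff j - P.coeff j) + (z ^ k - u ^ k) * P.coeff j)
            ≤ Complex.abs (z ^ k * (Q.coeff j - P.coeff j))
              + Complex.abs ((z ^ k - u ^ k) * P.coeff j) := AbsoluteValue.add_le _ _ _
          _ ≤ M ^ m * δ + m * M ^ m * B * η := by
              rw [map_mul, map_mul, map_pow]
              have t1 : Complex.abs z ^ k * Complex.abs (Q.coeff j - P.coeff j) ≤ M ^ m * δ := by
                apply mul_le_mul _ (hδ j hj2) (AbsoluteValue.nonneg _ _) (pow_nonneg hM0 m)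
                calc Complex.abs z ^ k ≤ M ^ k := by gcongr
                  _ ≤ M ^ m := pow_le_pow_right₀ hM1 hkm
              have t2 : Complex.abs (z ^ k - u ^ k) * Complex.abs (P.coeff j)
                  ≤ m * M ^ m * B * η := by
                have h1 : Complex.abs (z ^ k - u ^ k) ≤ k * M ^ k * Complex.abs (z - u) :=
                  pow_diff_bound z u M hM1 hz hu k
                have h2 : (k:ℝ) * M ^ k * Complex.abs (z - u) ≤ m * M ^ m * η := by
                  have : (k:ℝ) ≤ m := by exact_mod_cast hkm
                  have hMk : M ^ k ≤ M ^ m := pow_le_pow_right₀ hM1 hkm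
                  have := mul_le_mul (mul_le_mul this hMk (pow_nonneg hM0 k) (Nat.cast_nonneg m))
                    hη (AbsoluteValue.nonneg _ _)
                    (mul_nonneg (Nat.cast_nonneg m) (pow_nonneg hM0 m))
                  exact this
                calc Complex.abs (z ^ k - u ^ k) * Complex.abs (P.coeff j)
                    ≤ (m * M ^ m * η) * B := by
                      apply mul_le_mul (le_trans h1 h2) (hB j hj2) (AbsoluteValue.nonneg _ _)
                      positivity
                  _ = m * M ^ m * B * η := by ring
              linarith
    _ ≤ (m + 1) * (M ^ m * δ + m * M ^ m * B * η) := by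
        rw [Finset.sum_const, nsmul_eq_mul]
        apply mul_le_mul_of_nonneg_right _ (by positivity)
        have : (Finset.Icc (i+1) m).card ≤ m + 1 := by
          rw [Nat.card_Icc]
          omega
        exact_mod_cast this



/-- Main lemma: multiset matching of roots, by induction on the degree. -/
lemma roots_rel : ∀ (n : ℕ) (P : Polynomial ℂ), P.natDegree = n → P ≠ 0 →
    ∀ ε : ℝ, 0 < ε → ∃ δ > 0, ∀ Q : Polynomial ℂ, Q.natDegree = n →
      (∀ i ≤ n, Complex.abs (Q.coeff i - P.coeff i) ≤ δ) →
      Multiset.Rel (fun z u => Complex.abs (z - u) < ε) Q.roots P.roots := by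
  intro n
  induction n with
  | zero =>
    intro P hdeg hP ε hε
    have hc : P.coeff 0 ≠ 0 := by
      rw [← hdeg]; exact Polynomial.leadingCoeff_ne_zero.mpr hP
    have hc0 : 0 < Complex.abs (P.coeff 0) := AbsoluteValue.pos _ hc
    refine ⟨Complex.abs (P.coeff 0) / 2, by linarith, ?_⟩
    intro Q hQdeg hQcoeff
    have hQc : Q.coeff 0 ≠ 0 := by
      intro h0
      have h1 := hQcoeff 0 le_rfl
      rw [h0, zero_sub, AbsoluteValue.map_neg] at h1
      linarith
    have hQr : Q.roots = 0 := by
      have h := Polynomial.card_roots' Q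
      rw [hQdeg] at h
      exact Multiset.card_eq_zero.mp (Nat.le_zero.mp h)
    have hPr : P.roots = 0 := by
      have h := Polynomial.card_roots' P
      rw [hdeg] at h
      exact Multiset.card_eq_zero.mp (Nat.le_zero.mp h)
    rw [hQr, hPr]
    exact Multiset.Rel.zero
  | succ n IH =>
    intro P hdeg hP ε hε
    have hc : P.coeff (n+1) ≠ 0 := by
      rw [← hdeg]; exact Polynomial.leadingCoeff_ne_zero.mpr hP
    have hc0 : 0 < Complex.abs (P.coeff (n+1)) := AbsoluteValue.pos _ hc
    obtain ⟨M, hM1, hM⟩ := uniform_root_bound P (n+1) hdeg hP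
    have hM0 : (0:ℝ) < M := lt_of_lt_of_le one_pos hM1
    set B := (∑ j ∈ Finset.range (n+2), Complex.abs (P.coeff j)) + 1 with hBdef
    have hB : ∀ j ≤ n+1, Complex.abs (P.coeff j) ≤ B := by
      intro j hj
      have h1 : Complex.abs (P.coeff j) ≤ ∑ j ∈ Finset.range (n+2), Complex.abs (P.coeff j) :=
        Finset.single_le_sum (f := fun j => Complex.abs (P.coeff j))
          (fun _ _ => AbsoluteValue.nonneg _ _) (Finset.mem_range.mpr (by omega))
      linarith
    have hB0 : (0:ℝ) < B := by
      have : (0:ℝ) ≤ ∑ j ∈ Finset.range (n+2), Complex.abs (P.coeff j) :=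
        Finset.sum_nonneg fun _ _ => AbsoluteValue.nonneg _ _
      rw [hBdef]; linarith
    -- common δ₁ from the inductive hypothesis, over all roots of P
    have hroots : ∀ u ∈ P.roots.toFinset, ∃ δ > 0, ∀ Q₁ : Polynomial ℂ, Q₁.natDegree = n →
        (∀ i ≤ n, Complex.abs (Q₁.coeff i - (P /ₘ (X - C u)).coeff i) ≤ δ) →
        Multiset.Rel (fun z u => Complex.abs (z - u) < ε) Q₁.roots (P /ₘ (X - C u)).roots := by
      intro u hu
      have huP : u ∈ P.roots := Multiset.mem_toFinset.mp hu
      have hfac : (X - C u) * (P /ₘ (X - C u)) = P :=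
        Polynomial.mul_divByMonic_eq_iff_isRoot.mpr (Polynomial.isRoot_of_mem_roots huP)
      have hP₁ : (P /ₘ (X - C u)) ≠ 0 := by
        intro h0
        rw [h0, mul_zero] at hfac
        exact hP hfac.symm
      have hdeg₁ : (P /ₘ (X - C u)).natDegree = n := by
        rw [Polynomial.natDegree_divByMonic P (Polynomial.monic_X_sub_C u),
          Polynomial.natDegree_X_sub_C, hdeg]
        omega
      exact IH (P /ₘ (X - C u)) hdeg₁ hP₁ ε hε
    obtain ⟨δ₁, hδ₁0, hδ₁⟩ := exists_common_delta P.roots.toFinset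
      (fun u δ => ∀ Q₁ : Polynomial ℂ, Q₁.natDegree = n →
        (∀ i ≤ n, Complex.abs (Q₁.coeff i - (P /ₘ (X - C u)).coeff i) ≤ δ) →
        Multiset.Rel (fun z u => Complex.abs (z - u) < ε) Q₁.roots (P /ₘ (X - C u)).roots)
      (fun u δ δ' hδ' hle h => fun Q₁ h1 h2 =>
        h Q₁ h1 (fun i hi => le_trans (h2 i hi) hle)) hroots
    set D := ((n:ℝ)+2) * (M ^ (n+1) + (n+1) * M ^ (n+1) * B + 1) with hDdef
    have hD0 : (0:ℝ) < D := by positivity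
    set θ := δ₁ / D with hθdef
    have hθ0 : (0:ℝ) < θ := div_pos hδ₁0 hD0
    set η := min ε θ with hηdef
    have hη0 : (0:ℝ) < η := lt_min hε hθ0
    obtain ⟨δ₂, hδ₂0, hδ₂⟩ := near_root P (n+1) hdeg (Nat.succ_pos n) η hη0
    refine ⟨min δ₂ (min θ (min 1 (Complex.abs (P.coeff (n+1)) / 2))),
      lt_min hδ₂0 (lt_min hθ0 (lt_min one_pos (by linarith))), ?_⟩
    intro Q hQdeg hQcoeff
    have hQ0 : Q ≠ 0 := by
      intro h0
      rw [h0, Polynomial.natDegree_zero] at hQdeg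
      omega
    have hQco2 : ∀ i ≤ n+1, Complex.abs (Q.coeff i - P.coeff i) ≤ δ₂ :=
      fun i hi => le_trans (hQcoeff i hi) (min_le_left _ _)
    have hQcoθ : ∀ i ≤ n+1, Complex.abs (Q.coeff i - P.coeff i) ≤ θ :=
      fun i hi => le_trans (hQcoeff i hi) (le_trans (min_le_right _ _) (min_le_left _ _))
    have hQco1 : ∀ i ≤ n+1, Complex.abs (Q.coeff i - P.coeff i)
        ≤ min 1 (Complex.abs (P.coeff (n+1)) / 2) := by
      intro i hi
      refine le_min (le_trans (hQcoeff i hi) ?_) (le_trans (hQcoeff i hi) ?_)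
      · exact le_trans (min_le_right _ _) (le_trans (min_le_right _ _) (min_le_left _ _))
      · exact le_trans (min_le_right _ _) (le_trans (min_le_right _ _) (min_le_right _ _))
    -- Q has a root z
    have hQcard : Multiset.card Q.roots = n + 1 := by
      rw [← hQdeg]; exact Polynomial.splits_iff_card_roots.mp (IsAlgClosed.splits Q)
    have hQrne : Q.roots ≠ 0 := by
      intro h0
      rw [h0, Multiset.card_zero] at hQcard
      omega
    obtain ⟨z, hz⟩ := Multiset.exists_mem_of_ne_zero hQrne
    obtain ⟨u, hu, hzu⟩ := hδ₂ Q hQdeg hQco2 z hz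
    have hzuθ : Complex.abs (z - u) ≤ θ := le_trans hzu.le (min_le_right _ _)
    have hzuε : Complex.abs (z - u) < ε := lt_of_lt_of_le hzu (min_le_left _ _)
    have hzM : Complex.abs z ≤ M := hM Q hQdeg hQco1 z hz
    have huM : Complex.abs u ≤ M := by
      refine hM P hdeg (fun i _ => ?_) u hu
      rw [sub_self, map_zero]
      exact le_min zero_le_one (by linarith)
    -- factor out the roots
    have hQfac : (X - C z) * (Q /ₘ (X - C z)) = Q :=
      Polynomial.mul_divByMonic_eq_iff_isRoot.mpr (Polynomial.isRoot_of_mem_roots hz)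
    have hPfac : (X - C u) * (P /ₘ (X - C u)) = P :=
      Polynomial.mul_divByMonic_eq_iff_isRoot.mpr (Polynomial.isRoot_of_mem_roots hu)
    have hQ₁deg : (Q /ₘ (X - C z)).natDegree = n := by
      rw [Polynomial.natDegree_divByMonic Q (Polynomial.monic_X_sub_C z),
        Polynomial.natDegree_X_sub_C, hQdeg]
      omega
    -- coefficient bound for the quotients
    have hquot : ∀ i ≤ n, Complex.abs ((Q /ₘ (X - C z)).coeff i
        - (P /ₘ (X - C u)).coeff i) ≤ δ₁ := by
      intro i _
      have h1 := quot_coeff_bound P Q (n+1) hdeg hQdeg z u M θ θ B hM1 hzM huM hQcoθ hzuθ hB i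
      refine le_trans h1 ?_
      have h2 : ((n:ℝ)+1+1) * (M ^ (n+1) * θ + (n+1) * M ^ (n+1) * B * θ) ≤ D * θ := by
        rw [hDdef]
        nlinarith [hθ0.le, pow_nonneg hM0.le (n+1), hB0.le,
          mul_nonneg (mul_nonneg (Nat.cast_nonneg n : (0:ℝ) ≤ n) (pow_nonneg hM0.le (n+1))) hB0.le]
      have h3 : D * θ = δ₁ := by
        rw [hθdef, mul_div_cancel₀ _ (ne_of_gt hD0)]
      push_cast at h1 h2 ⊢
      linarith
    have hrel := hδ₁ u (Multiset.mem_toFinset.mpr hu) (Q /ₘ (X - C z)) hQ₁deg hquot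
    -- assemble
    have hQroots : Q.roots = z ::ₘ (Q /ₘ (X - C z)).roots := by
      conv_lhs => rw [← hQfac]
      rw [Polynomial.roots_mul (by rw [hQfac]; exact hQ0), Polynomial.roots_X_sub_C,
        Multiset.singleton_add]
    have hProots : P.roots = u ::ₘ (P /ₘ (X - C u)).roots := by
      conv_lhs => rw [← hPfac]
      rw [Polynomial.roots_mul (by rw [hPfac]; exact hP), Polynomial.roots_X_sub_C,
        Multiset.singleton_add]
    rw [hQroots, hProots]
    exact Multiset.Rel.cons hzuε hrel


lemma rel_exists {r : ℂ → ℂ → Prop} {s t : Multiset ℂ} (h : Multiset.Rel r s t) :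
    ∀ a ∈ s, ∃ b ∈ t, r a b := by
  induction h with
  | zero => intro a ha; simp at ha
  | @cons a b as bs hab _ ih =>
    intro x hx
    rcases Multiset.mem_cons.mp hx with rfl | hx
    · exact ⟨b, Multiset.mem_cons_self b bs, hab⟩
    · obtain ⟨c, hc, hrc⟩ := ih x hx
      exact ⟨c, Multiset.mem_cons_of_mem hc, hrc⟩

lemma rel_count {ε : ℝ} (hε : 0 < ε) (u : ℂ) :
    ∀ {s t : Multiset ℂ}, Multiset.Rel (fun z v => Complex.abs (z - v) < ε) s t →
    (∀ v ∈ t, v ≠ u → 2 * ε < Complex.abs (v - u)) →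
    Multiset.card (s.filter fun z => Complex.abs (z - u) < ε) = t.count u := by
  intro s t h
  induction h with
  | zero => intro _; simp
  | @cons a b as bs hab hrel ih =>
    intro hsep
    have hsep' : ∀ v ∈ bs, v ≠ u → 2 * ε < Complex.abs (v - u) :=
      fun v hv => hsep v (Multiset.mem_cons_of_mem hv)
    rw [Multiset.filter_cons, Multiset.count_cons, Multiset.card_add]
    by_cases hb : b = u
    · subst hb
      rw [if_pos hab, if_pos rfl, Multiset.card_singleton, ih hsep']
      omega
    · have hbu : 2 * ε < Complex.abs (b - u) :=
        hsep b (Multiset.mem_cons_self b bs) hb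
      have hna : ¬ (Complex.abs (a - u) < ε) := by
        intro hau
        have htri : Complex.abs (b - u) ≤ Complex.abs (b - a) + Complex.abs (a - u) := by
          have := AbsoluteValue.add_le Complex.abs (b - a) (a - u)
          simpa using this
        have hba : Complex.abs (b - a) < ε := by
          rw [show b - a = -(a - b) by ring, AbsoluteValue.map_neg]
          exact hab
        linarith
      rw [if_neg hna, if_neg (fun h => hb h.symm), ih hsep']
      simp

/-- Continuous dependence of the roots of a complex polynomial on its coefficients:
for `ε > 0` smaller than half the minimal distance between distinct roots of `P`,
there is `δ > 0` such that any `Q` of the same degree whose coefficients are `δ`-close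
to those of `P` has all its roots within `ε` of roots of `P`, and in the open disc of
radius `ε` around each root `u` of `P` the polynomial `Q` has exactly as many roots
(with multiplicity) as the multiplicity of `u`. -/
theorem continuity_of_roots (P : Polynomial ℂ) (n : ℕ) (hdeg : P.natDegree = n)
    (hn : 1 ≤ n) (ε : ℝ) (hε : 0 < ε)
    (hsep : ∀ u ∈ P.roots, ∀ v ∈ P.roots, u ≠ v → 2 * ε < ‖u - v‖) :
    ∃ δ > 0, ∀ Q : Polynomial ℂ, Q.natDegree = n →
      (∀ i ≤ n, ‖Q.coeff i - P.coeff i‖ ≤ δ) →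
      (∀ z ∈ Q.roots, ∃ u ∈ P.roots, ‖z - u‖ < ε) ∧
      (∀ u ∈ P.roots,
        Multiset.card (Q.roots.filter fun z => ‖z - u‖ < ε)
          = P.rootMultiplicity u) := by
  have hP : P ≠ 0 := by
    intro h0
    rw [h0, Polynomial.natDegree_zero] at hdeg
    omega
  obtain ⟨δ, hδ0, hδ⟩ := roots_rel n P hdeg hP ε hε
  refine ⟨δ, hδ0, ?_⟩
  intro Q hQdeg hQcoeff
  have hrel := hδ Q hQdeg hQcoeff
  constructor
  · exact rel_exists hrel
  · intro u hu
    have hcount := rel_count hε u hrel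
      (fun v hv hvu => hsep v hv u hu hvu)
    rw [show (Multiset.filter (fun z => ‖z - u‖ < ε) Q.roots).card = _ from hcount,
      Polynomial.count_roots]
end

section
/- Let P ∈ ℝ[X], let Q be a *ℝ-deformation of P, and set Ξ := Q − P ∈ ℝ*[X] (P viewed in ℝ*[X]). Let ξ ∈ ℝ* be a root of Q with standard part u := st ξ, and assume P(u) = 0, P'(u) ≠ 0 (so u is a simple root of P) and ξ ≠ u. Then the evaluation of Ξ at u is nonzero: Ξ(u) ≠ 0. -/
open Hyperreal Polynomial

/-- The coercion `ℝ → ℝ*` as a ring homomorphism. -/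
noncomputable def realToHyper : ℝ →+* ℝ* :=
  (Filter.Germ.coeRingHom _).comp (Pi.constRingHom ℕ ℝ)

lemma realToHyper_apply (r : ℝ) : realToHyper r = (r : ℝ*) := rfl

lemma isSt_pow_s6 {x : ℝ*} {r : ℝ} (h : IsSt x r) : ∀ n : ℕ, IsSt (x ^ n) (r ^ n)
  | 0 => by simpa using isSt_refl_real 1
  | n + 1 => by rw [pow_succ, pow_succ]; exact (isSt_pow_s6 h n).mul h

lemma IsSt.finsetSum {ι : Type*} (s : Finset ι) {F : ι → ℝ*} {G : ι → ℝ}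
    (h : ∀ i ∈ s, IsSt (F i) (G i)) : IsSt (∑ i ∈ s, F i) (∑ i ∈ s, G i) := by
  classical
  induction s using Finset.induction_on with
  | empty => simpa using isSt_refl_real 0
  | insert _ _ hx ih =>
    rw [Finset.sum_insert hx, Finset.sum_insert hx]
    exact (h _ (Finset.mem_insert_self _ _)).add
      (ih fun i hi => h i (Finset.mem_insert_of_mem hi))

lemma isSt_eval (f : Polynomial ℝ) {ξ : ℝ*} {u : ℝ} (hst : IsSt ξ u) :
    IsSt ((f.map realToHyper).eval ξ) (f.eval u) := by
  rw [eval_eq_sum_range' (lt_of_le_of_lt (natDegree_map_le) (Nat.lt_succ_self _)),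
    eval_eq_sum_range' (Nat.lt_succ_self f.natDegree)]
  refine IsSt.finsetSum _ fun i _ => ?_
  rw [coeff_map, realToHyper_apply]
  exact (isSt_refl_real _).mul (isSt_pow_s6 hst i)

lemma infinitesimal_eval (f : Polynomial ℝ*) (hf : ∀ i, Infinitesimal (f.coeff i))
    {ξ : ℝ*} {u : ℝ} (hst : IsSt ξ u) : Infinitesimal (f.eval ξ) := by
  rw [eval_eq_sum_range]
  have : (0 : ℝ) = ∑ i ∈ Finset.range (f.natDegree + 1), (0 * u ^ i) := by simp
  rw [Infinitesimal, this]
  exact IsSt.finsetSum _ fun i _ => IsSt.mul (hf i) (isSt_pow_s6 hst i)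

lemma add_divByMonic (a b q : Polynomial ℝ*) (hq : q.Monic) :
    (a + b) /ₘ q = a /ₘ q + b /ₘ q := by
  refine (div_modByMonic_unique _ (a %ₘ q + b %ₘ q) hq ⟨?_, ?_⟩).1
  · rw [mul_add]
    have ha := modByMonic_add_div a q
    have hb := modByMonic_add_div b q
    linear_combination ha + hb
  · exact lt_of_le_of_lt (degree_add_le _ _)
      (max_lt (degree_modByMonic_lt a hq) (degree_modByMonic_lt b hq))

/-- If `Q` is a `*ℝ`-deformation of `P`, `Ξ = Q - P`, `ξ` is a root of `Q` with
standard part `u`, `u` is a simple root of `P` and `ξ ≠ u`, then `Ξ(u) ≠ 0`. -/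
theorem xi_eval_ne_zero_of_simple_root (P : Polynomial ℝ) (Q : Polynomial ℝ*)
    (hdeg : Q.natDegree = P.natDegree)
    (hdef : ∀ i, Infinitesimal ((Q - P.map realToHyper).coeff i))
    (ξ : ℝ*) (u : ℝ) (hst : IsSt ξ u) (hroot : Q.eval ξ = 0)
    (hu : P.eval u = 0) (hu' : (derivative P).eval u ≠ 0) (hne : ξ ≠ (u : ℝ*)) :
    (Q - P.map realToHyper).eval (u : ℝ*) ≠ 0 := by
  intro h
  set Ξ : Polynomial ℝ* := Q - P.map realToHyper with hΞ
  -- P evaluated at u via the map is zero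
  have hPmap : (P.map realToHyper).eval ((u : ℝ*)) = 0 := by
    rw [eval_map, ← realToHyper_apply, eval₂_at_apply, hu, map_zero]
  have hQu : Q.eval ((u : ℝ*)) = 0 := by
    have : Q = P.map realToHyper + Ξ := by rw [hΞ]; ring
    rw [this, eval_add, hPmap, h, add_zero]
  -- the quotient of Q by X - u
  set G : Polynomial ℝ* := Q /ₘ (X - C (u : ℝ*)) with hG
  have hmonic := monic_X_sub_C ((u : ℝ*))
  have hdecomp := modByMonic_add_div Q (X - C ((u : ℝ*)))
  have hmod : Q %ₘ (X - C ((u : ℝ*))) = 0 := by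
    rw [modByMonic_X_sub_C_eq_C_eval, hQu, map_zero]
  have hg : G.eval ξ = 0 := by
    have h0 : (0 : ℝ*) = (ξ - (u : ℝ*)) * G.eval ξ := by
      have := congrArg (eval ξ) hdecomp
      rw [hmod, zero_add, eval_mul, eval_sub, eval_X, eval_C, hroot] at this
      rw [← this]
    rcases mul_eq_zero.mp h0.symm with h1 | h1
    · exact absurd (sub_eq_zero.mp h1) hne
    · exact h1
  -- split G
  have hQsplit : Q = P.map realToHyper + Ξ := by rw [hΞ]; ring
  have hGsplit : G = (P /ₘ (X - C u)).map realToHyper + Ξ /ₘ (X - C ((u : ℝ*))) := by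
    rw [hG, hQsplit, add_divByMonic _ _ _ hmonic]
    congr 1
    rw [map_divByMonic realToHyper (monic_X_sub_C u)]
    congr 1
    simp [realToHyper_apply]
  -- coefficients of Ξ /ₘ (X - C u) are infinitesimal
  have hΞdiv : ∀ i, Infinitesimal ((Ξ /ₘ (X - C ((u : ℝ*)))).coeff i) := by
    intro n
    rw [coeff_divByMonic_X_sub_C]
    have : (0 : ℝ) = ∑ i ∈ Finset.Icc (n + 1) Ξ.natDegree, (u ^ (i - (n + 1)) * 0) := by simp
    rw [Infinitesimal, this]
    refine IsSt.finsetSum _ fun i _ => ?_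
    have : IsSt (((u : ℝ*)) ^ (i - (n + 1))) (u ^ (i - (n + 1))) :=
      isSt_pow_s6 (isSt_refl_real u) _
    exact this.mul (hdef i)
  -- standard part of G.eval ξ
  have hGst : IsSt (G.eval ξ) ((P /ₘ (X - C u)).eval u) := by
    rw [hGsplit, eval_add]
    have h1 := isSt_eval (P /ₘ (X - C u)) hst
    have h2 := infinitesimal_eval _ hΞdiv hst
    simpa using h1.add h2
  have hP1 : (P /ₘ (X - C u)).eval u = 0 := by
    rw [hg] at hGst
    have : IsSt ((0 : ℝ*)) (0 : ℝ) := by simpa using isSt_refl_real 0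
    exact (this.unique hGst).symm
  -- but eval of P /ₘ (X - C u) at u equals P'(u)
  apply hu'
  have hfac : (X - C u) * (P /ₘ (X - C u)) = P :=
    mul_divByMonic_eq_iff_isRoot.mpr hu
  calc (derivative P).eval u
      = (derivative ((X - C u) * (P /ₘ (X - C u)))).eval u := by rw [hfac]
    _ = 0 := by
        rw [derivative_mul]
        simp [hP1]
end

section
/- Let P₁, P₂ ∈ ℝ[X] with P₂ ≠ 0, and let Q₁, Q₂ ∈ ℝ*[X] be *ℝ-deformations of P₁ and P₂ respectively. Write P₁ = P₂·P₃ + R with deg R < deg P₂ for the Euclidean division in ℝ[X], and Q₁ = Q₂·Q₃ + S with deg S < deg Q₂ for the Euclidean division in ℝ*[X]. Then every coefficient of Q₃ − P₃ and every coefficient of S − R is infinitesimal (P₃ and R being viewed in ℝ*[X] via coefficientwise coercion). -/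
open Hyperreal Polynomial

lemma infinitesimal_finsetSum {α : Type*} (s : Finset α) (f : α → ℝ*)
    (h : ∀ i ∈ s, Infinitesimal (f i)) : Infinitesimal (∑ i ∈ s, f i) := by
  classical
  induction s using Finset.induction_on with
  | empty => simpa using infinitesimal_zero
  | insert _ _ hx ih =>
    rw [Finset.sum_insert hx]
    exact (h _ (Finset.mem_insert_self _ _)).add
      (ih fun i hi => h i (Finset.mem_insert_of_mem hi))

lemma infinitesimal_sub' {x y : ℝ*} (hx : Infinitesimal x) (hy : Infinitesimal y) :
    Infinitesimal (x - y) := by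
  rw [sub_eq_add_neg]; exact hx.add hy.neg

lemma infinitesimal_mul_of_isSt {x y : ℝ*} {s : ℝ} (hx : Infinitesimal x)
    (hy : IsSt y s) : Infinitesimal (x * y) := by
  have := IsSt.mul hx hy
  simpa [Infinitesimal] using this

/-- Peeling off the leading coefficient of the quotient. -/
lemma reduce (B : Polynomial ℝ*) (hBfin : ∀ i, ∃ s : ℝ, IsSt (B.coeff i) s)
    (hlc : ¬ Infinitesimal B.leadingCoeff)
    (E q r : Polynomial ℝ*) (hE : ∀ i, Infinitesimal (E.coeff i))
    (heq : E = B * q + r) (hr : r.degree < B.degree) :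
    Infinitesimal q.leadingCoeff ∧
    (∀ i, Infinitesimal ((E - B * (C q.leadingCoeff * X ^ q.natDegree)).coeff i)) ∧
    (E - B * (C q.leadingCoeff * X ^ q.natDegree)) = B * q.eraseLead + r := by
  have hB0 : B ≠ 0 := by
    intro h
    rw [h, degree_zero] at hr
    exact absurd hr (by simp)
  set c := q.leadingCoeff with hc
  set d := q.natDegree with hd
  have hrn : r.coeff (B.natDegree + d) = 0 := by
    apply coeff_eq_zero_of_degree_lt
    refine hr.trans_le ?_
    rw [degree_eq_natDegree hB0]
    exact_mod_cast Nat.le_add_right _ _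
  have hEn : E.coeff (B.natDegree + d) = B.leadingCoeff * c := by
    rw [heq, coeff_add, coeff_mul_degree_add_degree, hrn, add_zero]
  have hinf : Infinitesimal (B.leadingCoeff * c) := hEn ▸ hE _
  obtain ⟨s, hs⟩ := hBfin B.natDegree
  have hs' : IsSt B.leadingCoeff s := hs
  have hlc0 : B.leadingCoeff ≠ 0 := fun h => hlc (h ▸ infinitesimal_zero)
  have hinv : IsSt B.leadingCoeff⁻¹ s⁻¹ := hs'.inv hlc
  have hcq : Infinitesimal c := by
    have h1 : IsSt (B.leadingCoeff⁻¹ * (B.leadingCoeff * c)) (s⁻¹ * 0) := hinv.mul hinf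
    rw [inv_mul_cancel_left₀ hlc0] at h1
    simpa [Infinitesimal] using h1
  refine ⟨hcq, ?_, ?_⟩
  · intro i
    have hco : (B * (C c * X ^ d)).coeff i =
        if d ≤ i then c * B.coeff (i - d) else 0 := by
      have : B * (C c * X ^ d) = (C c * B) * X ^ d := by ring
      rw [this, coeff_mul_X_pow', coeff_C_mul]
    rw [coeff_sub, hco]
    refine infinitesimal_sub' (hE i) ?_
    split
    · obtain ⟨t, ht⟩ := hBfin (i - d)
      exact infinitesimal_mul_of_isSt hcq ht
    · exact infinitesimal_zero
  · rw [heq, ← self_sub_C_mul_X_pow]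
    ring

lemma key (B : Polynomial ℝ*) (hBfin : ∀ i, ∃ s : ℝ, IsSt (B.coeff i) s)
    (hlc : ¬ Infinitesimal B.leadingCoeff) :
    ∀ k : ℕ, ∀ E q r : Polynomial ℝ*, q.natDegree ≤ k →
      (∀ i, Infinitesimal (E.coeff i)) → E = B * q + r → r.degree < B.degree →
      (∀ i, Infinitesimal (q.coeff i)) ∧ (∀ i, Infinitesimal (r.coeff i)) := by
  intro k
  induction k with
  | zero =>
    intro E q r hk hE heq hr
    obtain ⟨hcq, hE', heq'⟩ := reduce B hBfin hlc E q r hE heq hr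
    have hqC : q = C (q.coeff 0) := Polynomial.eq_C_of_natDegree_le_zero hk
    have hq0 : q.natDegree = 0 := Nat.le_zero.1 hk
    have hlcq : q.leadingCoeff = q.coeff 0 := by rw [leadingCoeff, hq0]
    have herase : q.eraseLead = 0 := by rw [hqC]; exact eraseLead_C _
    rw [herase, mul_zero, zero_add] at heq'
    constructor
    · intro i
      rw [hqC, coeff_C]
      split
      · rwa [← hlcq]
      · exact infinitesimal_zero
    · intro i
      have := hE' i
      rwa [heq'] at this
  | succ k ih =>
    intro E q r hk hE heq hr
    obtain ⟨hcq, hE', heq'⟩ := reduce B hBfin hlc E q r hE heq hr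
    have hq' : q.eraseLead.natDegree ≤ k := by
      refine (eraseLead_natDegree_le q).trans ?_
      omega
    obtain ⟨h1, h2⟩ := ih _ _ _ hq' hE' heq' hr
    refine ⟨?_, h2⟩
    intro i
    have hq : q = q.eraseLead + C q.leadingCoeff * X ^ q.natDegree :=
      (eraseLead_add_C_mul_X_pow q).symm
    rw [hq, coeff_add, coeff_C_mul, coeff_X_pow]
    refine (h1 i).add ?_
    split
    · simpa using hcq
    · simpa using infinitesimal_zero

lemma isSt_of_infinitesimal_sub {x : ℝ*} {r : ℝ} (h : Infinitesimal (x - r)) :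
    IsSt x r := by
  have h' : IsSt (x - r) 0 := h
  have := h'.add (isSt_refl_real r)
  simpa using this

/-- The quotient and remainder of the Euclidean division of `*ℝ`-deformations `Q₁, Q₂`
of `P₁, P₂` are `*ℝ`-deformations of the quotient and remainder of the Euclidean
division of `P₁` by `P₂`. -/
theorem euclidean_division_of_deformations (P₁ P₂ : Polynomial ℝ) (hP₂ : P₂ ≠ 0)
    (Q₁ Q₂ : Polynomial ℝ*)
    (hdeg₁ : Q₁.natDegree = P₁.natDegree) (hdeg₂ : Q₂.natDegree = P₂.natDegree)
    (hdef₁ : ∀ i, Infinitesimal ((Q₁ - P₁.map realToHyper).coeff i))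
    (hdef₂ : ∀ i, Infinitesimal ((Q₂ - P₂.map realToHyper).coeff i))
    (P₃ R : Polynomial ℝ) (hPdiv : P₁ = P₂ * P₃ + R) (hPrem : R.degree < P₂.degree)
    (Q₃ S : Polynomial ℝ*) (hQdiv : Q₁ = Q₂ * Q₃ + S) (hQrem : S.degree < Q₂.degree) :
    (∀ i, Infinitesimal ((Q₃ - P₃.map realToHyper).coeff i)) ∧
    (∀ i, Infinitesimal ((S - R.map realToHyper).coeff i)) := by
  have hQ₂0 : Q₂ ≠ 0 := by
    intro h
    rw [h, degree_zero] at hQrem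
    exact absurd hQrem (by simp)
  have hcoe : ∀ (P : Polynomial ℝ) (i : ℕ), (P.map realToHyper).coeff i = ((P.coeff i : ℝ) : ℝ*) := by
    intro P i
    rw [coeff_map]
    rfl
  have hBfin : ∀ i, ∃ s : ℝ, IsSt (Q₂.coeff i) s := by
    intro i
    refine ⟨P₂.coeff i, isSt_of_infinitesimal_sub ?_⟩
    have := hdef₂ i
    rwa [coeff_sub, hcoe] at this
  have hlc : ¬ Infinitesimal Q₂.leadingCoeff := by
    intro h
    have h1 : IsSt (Q₂.coeff P₂.natDegree) (P₂.coeff P₂.natDegree) := by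
      refine isSt_of_infinitesimal_sub ?_
      have := hdef₂ P₂.natDegree
      rwa [coeff_sub, hcoe] at this
    have h2 : IsSt (Q₂.coeff P₂.natDegree) 0 := by
      rwa [leadingCoeff, hdeg₂] at h
    have h3 : P₂.coeff P₂.natDegree = 0 := h1.unique h2
    exact leadingCoeff_ne_zero.2 hP₂ h3
  set q := Q₃ - P₃.map realToHyper with hq
  set r := S - R.map realToHyper with hrdef
  set E := (Q₁ - P₁.map realToHyper) - (Q₂ - P₂.map realToHyper) * (P₃.map realToHyper)
    with hEdef
  have hmap : P₁.map realToHyper = P₂.map realToHyper * P₃.map realToHyper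
      + R.map realToHyper := by
    rw [hPdiv, Polynomial.map_add, Polynomial.map_mul]
  have heq : E = Q₂ * q + r := by
    rw [hEdef, hq, hrdef, hQdiv, hmap]
    ring
  have hE : ∀ i, Infinitesimal (E.coeff i) := by
    intro i
    rw [hEdef, coeff_sub, coeff_mul]
    refine infinitesimal_sub' (hdef₁ i) ?_
    refine infinitesimal_finsetSum _ _ fun p _ => ?_
    rw [hcoe]
    exact infinitesimal_mul_of_isSt (hdef₂ p.1) (isSt_refl_real _)
  have hrlt : r.degree < Q₂.degree := by
    refine (degree_sub_le _ _).trans_lt (max_lt hQrem ?_)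
    refine Polynomial.degree_map_le.trans_lt ?_
    refine hPrem.trans_le (le_of_eq ?_)
    rw [degree_eq_natDegree hP₂, degree_eq_natDegree hQ₂0, hdeg₂]
  exact key Q₂ hBfin hlc q.natDegree E q r le_rfl hE heq hrlt
end

section
/- Let P₁, P₂ ∈ ℝ[X] be nonzero polynomials and let D = gcd(P₁, P₂) in ℝ[X]. Let Q₁, Q₂ ∈ ℝ*[X] be *ℝ-deformations of P₁ and P₂. Define the Euclidean remainder sequence r₀ := Q₁, r₁ := Q₂, and r_{j+2} := r_j mod r_{j+1} in ℝ*[X] (with r_{j+2} := 0 when r_{j+1} = 0). Suppose k is an index such that: every coefficient of r_{k+1} is infinitesimal; some coefficient of r_k is not infinitesimal; and for every j ≤ k, all coefficients of r_j are finite and the leading coefficient of r_j is not infinitesimal. Then the real polynomial °r_k whose i-th coefficient is st(coeff_i(r_k)) is a nonzero real scalar multiple of D; that is, the standard part of the PGCD of Q₁ and Q₂ is an associate of gcd(P₁, P₂). -/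
open Hyperreal Polynomial

/-- All coefficients are finite. -/
def AllFin (A : Polynomial ℝ*) : Prop := ∀ i, ¬ Infinite (A.coeff i)

lemma not_infinite_sum {α : Type*} (s : Finset α) (f : α → ℝ*)
    (h : ∀ a ∈ s, ¬ Infinite (f a)) : ¬ Infinite (∑ a ∈ s, f a) := by
  classical
  induction s using Finset.cons_induction with
  | empty => simpa using not_infinite_zero
  | cons a s ha ih =>
      rw [Finset.sum_cons]
      exact not_infinite_add (h a (by simp)) (ih fun b hb => h b (by simp [hb]))

lemma st_sum {α : Type*} (s : Finset α) (f : α → ℝ*)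
    (h : ∀ a ∈ s, ¬ Infinite (f a)) : st (∑ a ∈ s, f a) = ∑ a ∈ s, st (f a) := by
  classical
  induction s using Finset.cons_induction with
  | empty => simp [show st (0:ℝ*) = 0 by simpa using st_id_real 0]
  | cons a s ha ih =>
      rw [Finset.sum_cons, Finset.sum_cons,
        st_add (h a (by simp)) (not_infinite_sum _ _ fun b hb => h b (by simp [hb])),
        ih fun b hb => h b (by simp [hb])]

lemma allFin_zero : AllFin 0 := fun i => by simpa using not_infinite_zero
lemma allFin_add {A B} (hA : AllFin A) (hB : AllFin B) : AllFin (A + B) := fun i => by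
  rw [coeff_add]; exact not_infinite_add (hA i) (hB i)
lemma allFin_sub {A B} (hA : AllFin A) (hB : AllFin B) : AllFin (A - B) := fun i => by
  rw [coeff_sub, sub_eq_add_neg]; exact not_infinite_add (hA i) (not_infinite_neg (hB i))
lemma allFin_mul {A B} (hA : AllFin A) (hB : AllFin B) : AllFin (A * B) := fun i => by
  rw [coeff_mul]
  exact not_infinite_sum _ _ fun p _ => not_infinite_mul (hA p.1) (hB p.2)
lemma allFin_C {x : ℝ*} (hx : ¬ Infinite x) : AllFin (C x) := fun i => by
  rw [coeff_C]; split <;> simpa using (by first | exact hx | exact not_infinite_zero)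
lemma allFin_X_pow (n : ℕ) : AllFin ((X : Polynomial ℝ*) ^ n) := fun i => by
  rw [coeff_X_pow]; split <;> first | exact not_infinite_real 1 | exact not_infinite_zero

/-- standard-part polynomial -/
noncomputable def stp (A : Polynomial ℝ*) : Polynomial ℝ :=
  ∑ i ∈ Finset.range (A.natDegree + 1), C (st (A.coeff i)) * X ^ i

lemma stp_coeff (A : Polynomial ℝ*) (n : ℕ) : (stp A).coeff n = st (A.coeff n) := by
  rw [stp, finset_sum_coeff]
  simp only [coeff_C_mul, coeff_X_pow, mul_ite, mul_one, mul_zero]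
  rw [Finset.sum_ite_eq (Finset.range (A.natDegree + 1)) n (fun i => st (A.coeff i))]
  split
  · rfl
  · rename_i h
    rw [coeff_eq_zero_of_natDegree_lt (by simpa using Nat.lt_of_succ_le (Nat.not_lt.1 (by simpa [Finset.mem_range] using h)))]
    exact (by simpa using st_id_real 0 : st (0:ℝ*) = 0).symm

lemma stp_add {A B} (hA : AllFin A) (hB : AllFin B) : stp (A + B) = stp A + stp B := by
  ext n
  rw [coeff_add, stp_coeff, stp_coeff, stp_coeff, coeff_add, st_add (hA n) (hB n)]

lemma stp_mul {A B} (hA : AllFin A) (hB : AllFin B) : stp (A * B) = stp A * stp B := by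
  ext n
  rw [stp_coeff, coeff_mul, coeff_mul,
    st_sum _ _ (fun p _ => not_infinite_mul (hA p.1) (hB p.2))]
  exact Finset.sum_congr rfl fun p _ => by
    rw [st_mul (hA p.1) (hB p.2), stp_coeff, stp_coeff]

lemma stp_eq_zero {A : Polynomial ℝ*} (h : ∀ i, Infinitesimal (A.coeff i)) : stp A = 0 := by
  ext n
  rw [stp_coeff, (h n).st_eq, coeff_zero]

lemma stp_deform {P : Polynomial ℝ} {Q : Polynomial ℝ*}
    (h : ∀ i, Infinitesimal ((Q - P.map realToHyper).coeff i)) : stp Q = P := by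
  ext n
  rw [stp_coeff]
  have h' : Infinitesimal (Q.coeff n - ((P.coeff n : ℝ) : ℝ*)) := by
    have := h n
    rwa [coeff_sub, coeff_map, realToHyper_apply] at this
  exact (isSt_of_infinitesimal_sub h').st_eq

lemma allFin_divByMonic (B : Polynomial ℝ*) (hB : B.Monic) (hBf : AllFin B)
    (A : Polynomial ℝ*) (hAf : AllFin A) : AllFin (A /ₘ B) := by
  by_cases hB1 : B = 1
  · simpa [hB1, divByMonic_one] using hAf
  generalize hn : A.natDegree = n
  induction n using Nat.strong_induction_on generalizing A with
  | _ n ih =>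
    by_cases h0 : A = 0
    · simpa [h0, zero_divByMonic] using allFin_zero
    by_cases hlt : degree A < degree B
    · rw [(divByMonic_eq_zero_iff hB).2 hlt]; exact allFin_zero
    · have hdle : degree B ≤ degree A := not_lt.1 hlt
      have hndle : B.natDegree ≤ A.natDegree := natDegree_le_natDegree hdle
      have hlc : A.leadingCoeff ≠ 0 := mt leadingCoeff_eq_zero.1 h0
      set L : Polynomial ℝ* := C A.leadingCoeff * X ^ (A.natDegree - B.natDegree) with hL
      set A' : Polynomial ℝ* := A - L * B with hA'
      have hLB_deg : degree (L * B) = degree A := by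
        rw [degree_mul, degree_C_mul_X_pow _ hlc, degree_eq_natDegree hB.ne_zero,
          degree_eq_natDegree h0, ← Nat.cast_add, Nat.sub_add_cancel hndle]
      have hLB_lc : leadingCoeff (L * B) = A.leadingCoeff := by
        rw [leadingCoeff_mul, leadingCoeff_C_mul_X_pow, hB.leadingCoeff, mul_one]
      have hA'deg : degree A' < degree A := degree_sub_lt hLB_deg.symm h0 hLB_lc.symm
      have hn1 : 1 ≤ n := by
        rcases Nat.eq_zero_or_pos n with h | h
        · exfalso
          have hBn : B.natDegree = 0 := by omega
          exact hB1 (hB.natDegree_eq_zero.1 hBn)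
        · exact h
      have hA'f : AllFin A' :=
        allFin_sub hAf (allFin_mul (allFin_mul (allFin_C (hAf A.natDegree)) (allFin_X_pow _)) hBf)
      have key : A /ₘ B = L + A' /ₘ B := by
        have h := modByMonic_add_div A' B
        have heq : A' %ₘ B + B * (L + A' /ₘ B) = A := by linear_combination h + hA'
        exact (div_modByMonic_unique _ _ hB ⟨heq, degree_modByMonic_lt A' hB⟩).1
      have hA'n : A'.natDegree < n := by
        rcases eq_or_ne A' 0 with h | h
        · rw [h]; simpa using Nat.lt_of_lt_of_le Nat.zero_lt_one hn1
        · rw [← hn]; exact natDegree_lt_natDegree h hA'deg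
      rw [key]
      exact allFin_add (allFin_mul (allFin_C (hAf A.natDegree)) (allFin_X_pow _)) (ih _ hA'n A' hA'f rfl)

lemma allFin_div (A B : Polynomial ℝ*) (hAf : AllFin A) (hBf : AllFin B)
    (hlB : ¬ Infinitesimal B.leadingCoeff) : AllFin (A / B) := by
  have hlc0 : B.leadingCoeff ≠ 0 := fun h => hlB (by rw [h]; exact infinitesimal_zero)
  have hB0 : B ≠ 0 := fun h => hlc0 (by simp [h])
  have hinv : ¬ Infinite (B.leadingCoeff⁻¹) :=
    fun h => hlB ((infinitesimal_iff_infinite_inv hlc0).2 h)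
  rw [Polynomial.div_def]
  exact allFin_mul (allFin_C hinv)
    (allFin_divByMonic _ (monic_mul_leadingCoeff_inv hB0)
      (allFin_mul hBf (allFin_C hinv)) A hAf)

open Classical in
/-- The Euclidean remainder sequence of `Q₁, Q₂ ∈ ℝ*[X]`:
`r₀ = Q₁`, `r₁ = Q₂`, `r_{j+2} = r_j mod r_{j+1}` (and `0` once the sequence hits `0`). -/
noncomputable def remSeq (Q₁ Q₂ : Polynomial ℝ*) : ℕ → Polynomial ℝ*
  | 0 => Q₁
  | 1 => Q₂
  | (j + 2) =>
      if remSeq Q₁ Q₂ (j + 1) = 0 then 0 else remSeq Q₁ Q₂ j % remSeq Q₁ Q₂ (j + 1)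

/-- The standard part of the PGCD (the last remainder in the Euclidean algorithm for
deformations `Q₁, Q₂` not all of whose coefficients are infinitesimal) is a nonzero
real scalar multiple of `gcd(P₁, P₂)`. -/
theorem st_pgcd_associate_gcd (P₁ P₂ : Polynomial ℝ) (hP₁ : P₁ ≠ 0) (hP₂ : P₂ ≠ 0)
    (Q₁ Q₂ : Polynomial ℝ*)
    (hdeg₁ : Q₁.natDegree = P₁.natDegree) (hdeg₂ : Q₂.natDegree = P₂.natDegree)
    (hdef₁ : ∀ i, Infinitesimal ((Q₁ - P₁.map realToHyper).coeff i))
    (hdef₂ : ∀ i, Infinitesimal ((Q₂ - P₂.map realToHyper).coeff i))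
    (k : ℕ)
    (hlast : ∀ i, Infinitesimal ((remSeq Q₁ Q₂ (k + 1)).coeff i))
    (hnotinf : ∃ i, ¬Infinitesimal ((remSeq Q₁ Q₂ k).coeff i))
    (hfin : ∀ j ≤ k, (∀ i, ¬Infinite ((remSeq Q₁ Q₂ j).coeff i)) ∧
      ¬Infinitesimal ((remSeq Q₁ Q₂ j).leadingCoeff))
    (S : Polynomial ℝ) (hS : ∀ i, S.coeff i = st ((remSeq Q₁ Q₂ k).coeff i)) :
    ∃ c : ℝ, c ≠ 0 ∧ S = c • EuclideanDomain.gcd P₁ P₂ := by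
  set D := EuclideanDomain.gcd P₁ P₂ with hD
  set r : ℕ → Polynomial ℝ* := remSeq Q₁ Q₂ with hr
  have hr0 : r 0 = Q₁ := rfl
  have hr1 : r 1 = Q₂ := rfl
  -- k = 0 is impossible
  rcases Nat.eq_zero_or_pos k with hk0 | hkpos
  · exfalso
    apply hP₂
    rw [← stp_deform hdef₂]
    apply stp_eq_zero
    intro i
    have := hlast i
    rwa [hk0] at this
  -- basics
  have hne : ∀ j ≤ k, r j ≠ 0 := by
    intro j hj h0
    have := (hfin j hj).2
    rw [hr] at this
    rw [hr] at h0
    rw [h0, leadingCoeff_zero] at this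
    exact this infinitesimal_zero
  have hstp0 : stp (r 0) = P₁ := stp_deform hdef₁
  have hstp1 : stp (r 1) = P₂ := stp_deform hdef₂
  have hstpk1 : stp (r (k + 1)) = 0 := stp_eq_zero hlast
  -- the key recurrence on standard parts
  have hstep : ∀ j, j + 2 ≤ k + 1 →
      ∃ T : Polynomial ℝ, stp (r j) = stp (r (j + 1)) * T + stp (r (j + 2)) := by
    intro j hj
    have h1 : r (j + 1) ≠ 0 := hne _ (by omega)
    have hrec : r (j + 2) = r j % r (j + 1) := by
      show remSeq Q₁ Q₂ (j + 2) = _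
      rw [remSeq, if_neg h1]
    have hAf : AllFin (r j) := (hfin j (by omega)).1
    have hBf : AllFin (r (j + 1)) := (hfin (j + 1) (by omega)).1
    have hq : AllFin (r j / r (j + 1)) :=
      allFin_div _ _ hAf hBf (hfin (j + 1) (by omega)).2
    have heq : r (j + 1) * (r j / r (j + 1)) + r (j + 2) = r j := by
      rw [hrec]; exact EuclideanDomain.div_add_mod _ _
    have hCf : AllFin (r (j + 2)) := by
      rcases Nat.lt_or_ge (j + 2) (k + 1) with h | h
      · exact (hfin (j + 2) (by omega)).1
      · have h2 : j + 2 = k + 1 := by omega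
        intro i
        rw [h2]
        exact (hlast i).not_infinite
    refine ⟨stp (r j / r (j + 1)), ?_⟩
    calc stp (r j) = stp (r (j + 1) * (r j / r (j + 1)) + r (j + 2)) := by rw [heq]
      _ = _ := by rw [stp_add (allFin_mul hBf hq) hCf, stp_mul hBf hq]
  -- forward: D divides every stp (r j)
  have fwd : ∀ j ≤ k, D ∣ stp (r j) ∧ D ∣ stp (r (j + 1)) := by
    intro j
    induction j with
    | zero =>
        intro _
        exact ⟨by rw [hstp0]; exact EuclideanDomain.gcd_dvd_left _ _,
          by rw [hstp1]; exact EuclideanDomain.gcd_dvd_right _ _⟩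
    | succ n ih =>
        intro h
        obtain ⟨h1, h2⟩ := ih (by omega)
        obtain ⟨T, hT⟩ := hstep n (by omega)
        refine ⟨h2, ?_⟩
        have : stp (r (n + 2)) = stp (r n) - stp (r (n + 1)) * T := by rw [hT]; ring
        rw [show n + 1 + 1 = n + 2 from rfl, this]
        exact dvd_sub h1 (h2.mul_right T)
  -- backward: stp (r k) divides everything back to the start
  have bwd : ∀ m ≤ k, stp (r k) ∣ stp (r (k - m)) ∧ stp (r k) ∣ stp (r (k - m + 1)) := by
    intro m
    induction m with
    | zero =>
        intro _
        rw [Nat.sub_zero]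
        exact ⟨dvd_rfl, by rw [hstpk1]; exact dvd_zero _⟩
    | succ n ih =>
        intro h
        obtain ⟨h1, h2⟩ := ih (by omega)
        have hj1 : k - (n + 1) + 1 = k - n := by omega
        have hj2 : k - (n + 1) + 2 = k - n + 1 := by omega
        obtain ⟨T, hT⟩ := hstep (k - (n + 1)) (by omega)
        rw [hj1, hj2] at hT
        constructor
        · rw [hT]
          exact dvd_add (h1.mul_right T) h2
        · rw [hj1]
          exact h1
  obtain ⟨hb0, hb1⟩ := bwd k le_rfl
  rw [Nat.sub_self] at hb0 hb1
  rw [hstp0] at hb0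
  rw [show (0 : ℕ) + 1 = 1 from rfl, hstp1] at hb1
  have hkD : stp (r k) ∣ D := EuclideanDomain.dvd_gcd hb0 hb1
  have hDk : D ∣ stp (r k) := (fwd k le_rfl).1
  -- S = stp (r k)
  have hSe : S = stp (r k) := by
    ext n
    rw [hS n, stp_coeff]
  -- S ≠ 0
  have hS0 : S ≠ 0 := by
    obtain ⟨i, hi⟩ := hnotinf
    intro h
    apply hi
    have hsti : st ((remSeq Q₁ Q₂ k).coeff i) = 0 := by
      rw [← hS i, h, coeff_zero]
    have := infinitesimal_sub_st ((hfin k le_rfl).1 i)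
    rwa [hsti, Hyperreal.coe_zero, sub_zero] at this
  -- conclude
  obtain ⟨u, hu⟩ : Associated D S := by
    rw [hSe]
    exact associated_of_dvd_dvd hDk hkD
  obtain ⟨c, hcu, hc⟩ := Polynomial.isUnit_iff.1 u.isUnit
  refine ⟨c, hcu.ne_zero, ?_⟩
  rw [Polynomial.smul_eq_C_mul, hc, mul_comm, hu]
end
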